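/- Let G be a finitely generated group with a recursively enumerable presentation ⟨S | R⟩, and suppose G is just infinite. Then the word problem for G is decidable. -/

import Mathlib

def JustInfinite (G : Type*) [Group G] : Prop :=
  Infinite G ∧ ∀ N : Subgroup G, N.Normal → N ≠ ⊥ → Finite (G ⧸ N)

set_option maxHeartbeats 1600000

namespace WP

open Nat.Partrec (Code)
open Nat.Partrec.Code
open FreeGroup Primrec

open Nat.Partrec (Code)
open Nat.Partrec.Code

theorem rePred_of_exists {α : Type*} [Primcodable α] {p : α → Prop} {f : α → ℕ → Bool}
    (hf : Computable₂ f) (h : ∀ a, p a ↔ ∃ n, f a n = true) : REPred p := by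
  have H : Partrec fun a => (Nat.rfind fun n => Part.some (f a n)).map fun _ => () :=
    (Partrec.rfind hf.partrec₂).map (Computable.const ()).to₂
  refine H.of_eq fun a => Part.ext fun u => ?_
  simp only [Part.mem_map_iff, Part.mem_assert_iff, Part.mem_some_iff]
  constructor
  · rintro ⟨n, hn, -⟩
    have := Nat.rfind_spec hn
    simp only [Part.mem_some_iff] at this
    exact ⟨(h a).2 ⟨n, this.symm⟩, trivial⟩
  · rintro ⟨hpa, -⟩
    obtain ⟨n, hn⟩ := (h a).1 hpa
    obtain ⟨m, hm, -⟩ := Nat.rfind_min' (p := fun n => f a n) hn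
    exact ⟨m, hm, trivial⟩

theorem exists_verifier_of_rePred {α : Type*} [Primcodable α] {p : α → Prop} (hp : REPred p) :
    ∃ f : α → ℕ → Bool, Primrec₂ f ∧ (∀ a m n, m ≤ n → f a m = true → f a n = true) ∧
      ∀ a, p a ↔ ∃ n, f a n = true := by
  obtain ⟨c, hc⟩ := Nat.Partrec.Code.exists_code.1 hp
  refine ⟨fun a n => (evaln n c (Encodable.encode a)).isSome, ?_, ?_, ?_⟩
  · exact Primrec.option_isSome.comp <| primrec_evaln.comp <|
      ((Primrec.snd.pair (Primrec.const c)).pair (Primrec.encode.comp Primrec.fst))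
  · intro a m n hmn hm
    rw [Option.isSome_iff_exists] at hm ⊢
    obtain ⟨x, hx⟩ := hm
    exact ⟨x, evaln_mono hmn hx⟩
  · intro a
    have h1 : p a ↔ (eval c (Encodable.encode a)).Dom := by
      rw [hc]
      simp [Encodable.encodek, Part.assert]
    rw [h1]
    constructor
    · intro hd
      obtain ⟨x, hx⟩ := Part.dom_iff_mem.1 hd
      obtain ⟨n, hn⟩ := evaln_complete.1 hx
      exact ⟨n, by rw [Option.isSome_iff_exists]; exact ⟨x, hn⟩⟩
    · rintro ⟨n, hn⟩
      rw [Option.isSome_iff_exists] at hn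
      obtain ⟨x, hx⟩ := hn
      exact Part.dom_iff_mem.2 ⟨x, evaln_complete.2 ⟨n, hx⟩⟩
open FreeGroup
variable {k : ℕ}
abbrev Wd (k : ℕ) := List (Fin k × Bool)

def conjWord (p : Wd k × Wd k × Bool) : Wd k :=
  p.1 ++ (cond p.2.2 p.2.1 (invRev p.2.1)) ++ invRev p.1

def conjElt (p : Wd k × Wd k × Bool) : FreeGroup (Fin k) :=
  mk p.1 * (cond p.2.2 (mk p.2.1) (mk p.2.1)⁻¹) * (mk p.1)⁻¹

lemma mk_conjWord (p : Wd k × Wd k × Bool) : mk (conjWord p) = conjElt p := by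
  rcases p with ⟨u, r, b⟩
  cases b <;> simp [conjWord, conjElt, ← mul_mk, inv_mk, mul_assoc]

def wordOf (L : List (Wd k × Wd k × Bool)) : Wd k := (L.map conjWord).flatten

lemma mk_wordOf_cons (p : Wd k × Wd k × Bool) (L : List (Wd k × Wd k × Bool)) :
    mk (wordOf (p :: L)) = conjElt p * mk (wordOf L) := by
  rw [show wordOf (p :: L) = conjWord p ++ wordOf L by simp [wordOf], ← mul_mk, mk_conjWord]

lemma mk_wordOf (L : List (Wd k × Wd k × Bool)) : mk (wordOf L) = (L.map conjElt).prod := by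
  induction L with
  | nil => simp [wordOf, ← one_eq_mk]
  | cons p L ih =>
    simp only [wordOf, List.map_cons, List.flatten_cons, List.prod_cons, ← mul_mk,
      mk_conjWord, ← ih]

theorem mem_normalClosure_iff {S : Set (FreeGroup (Fin k))} {v : Wd k} :
    mk v ∈ Subgroup.normalClosure S ↔
      ∃ L : List (Wd k × Wd k × Bool), (∀ p ∈ L, mk p.2.1 ∈ S) ∧ mk (wordOf L) = mk v := by
  constructor
  · intro hv
    have hv' : mk v ∈ (Subgroup.closure (Group.conjugatesOfSet S)).toSubmonoid := hv
    rw [Subgroup.closure_toSubmonoid] at hv'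
    obtain ⟨l, hl, hprod⟩ := Submonoid.exists_list_of_mem_closure hv'
    suffices h : ∀ l : List (FreeGroup (Fin k)),
        (∀ y ∈ l, y ∈ Group.conjugatesOfSet S ∪ (Group.conjugatesOfSet S)⁻¹) →
        ∃ L : List (Wd k × Wd k × Bool), (∀ p ∈ L, mk p.2.1 ∈ S) ∧ mk (wordOf L) = l.prod by
      obtain ⟨L, h1, h2⟩ := h l hl
      exact ⟨L, h1, by rw [h2, hprod]⟩
    intro l
    induction l with
    | nil => exact fun _ => ⟨[], by simp, by simp [wordOf, ← one_eq_mk]⟩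
    | cons y l ih =>
      intro hyl
      obtain ⟨L, h1, h2⟩ := ih fun z hz => hyl z (List.mem_cons_of_mem _ hz)
      have hy := hyl y (List.mem_cons_self)
      rcases hy with hy | hy
      · obtain ⟨a, haS, hconj⟩ := Group.mem_conjugatesOfSet_iff.1 hy
        obtain ⟨c, hc⟩ := isConj_iff.1 hconj
        refine ⟨(c.toWord, a.toWord, true) :: L, ?_, ?_⟩
        · intro p hp'
          rcases List.mem_cons.1 hp' with rfl | hp'
          · simpa [mk_toWord] using haS
          · exact h1 p hp'
        · rw [mk_wordOf_cons, h2, List.prod_cons]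
          simp [conjElt, mk_toWord, hc]
      · rw [Set.mem_inv] at hy
        obtain ⟨a, haS, hconj⟩ := Group.mem_conjugatesOfSet_iff.1 hy
        obtain ⟨c, hc⟩ := isConj_iff.1 hconj
        refine ⟨(c.toWord, a.toWord, false) :: L, ?_, ?_⟩
        · intro p hp'
          rcases List.mem_cons.1 hp' with rfl | hp'
          · simpa [mk_toWord] using haS
          · exact h1 p hp'
        · rw [mk_wordOf_cons, h2, List.prod_cons]
          have : y = c * a⁻¹ * c⁻¹ := by
            have := congrArg (·⁻¹) hc
            simpa [mul_assoc] using this.symm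
          simp [conjElt, mk_toWord, this]
  · rintro ⟨L, h1, h2⟩
    rw [← h2, mk_wordOf]
    refine Subgroup.list_prod_mem _ fun x hx => ?_
    simp only [List.mem_map] at hx
    obtain ⟨p, hp, rfl⟩ := hx
    have hrel : mk p.2.1 ∈ Subgroup.normalClosure S := Subgroup.subset_normalClosure (h1 p hp)
    have hnorm : (Subgroup.normalClosure S).Normal := Subgroup.normalClosure_normal
    cases hb : p.2.2 <;> simp only [conjElt, hb, cond_false, cond_true]
    · exact hnorm.conj_mem _ (inv_mem hrel) _
    · exact hnorm.conj_mem _ hrel _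

-- Boolean all/any as foldr
lemma all_eq_foldr (l : List β) (f : β → Bool) :
    l.all f = l.foldr (fun b s => f b && s) true := by
  induction l with
  | nil => rfl
  | cons b l ih => simp [List.all_cons, ih]

lemma any_eq_foldr (l : List β) (f : β → Bool) :
    l.any f = l.foldr (fun b s => f b || s) false := by
  induction l with
  | nil => rfl
  | cons b l ih => simp [List.any_cons, ih]

theorem primrec_all {α β : Type*} [Primcodable α] [Primcodable β]
    {f : α → List β} {g : α → β → Bool} (hf : Primrec f) (hg : Primrec₂ g) :
    Primrec fun a => (f a).all (g a) := by
  have h : Primrec fun a => (f a).foldr (fun b s => g a b && s) true :=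
    Primrec.list_foldr hf (Primrec.const true)
      ((Primrec.dom_bool₂ (· && ·)).comp (hg.comp .fst (Primrec.fst.comp .snd))
        (Primrec.snd.comp .snd)).to₂
  exact h.of_eq fun a => (all_eq_foldr _ _).symm

theorem primrec_any {α β : Type*} [Primcodable α] [Primcodable β]
    {f : α → List β} {g : α → β → Bool} (hf : Primrec f) (hg : Primrec₂ g) :
    Primrec fun a => (f a).any (g a) := by
  have h : Primrec fun a => (f a).foldr (fun b s => g a b || s) false :=
    Primrec.list_foldr hf (Primrec.const false)
      ((Primrec.dom_bool₂ (· || ·)).comp (hg.comp .fst (Primrec.fst.comp .snd))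
        (Primrec.snd.comp .snd)).to₂
  exact h.of_eq fun a => (any_eq_foldr _ _).symm

theorem primrec_invRev : Primrec (invRev : Wd k → Wd k) := by
  have : Primrec fun l : Wd k => (l.map fun g => (g.1, !g.2)).reverse :=
    Primrec.list_reverse.comp <| Primrec.list_map .id
      ((Primrec.fst.comp .snd).pair
        ((Primrec.dom_bool (!·)).comp (Primrec.snd.comp .snd))).to₂
  exact this.of_eq fun l => rfl

def redStep (x : Fin k × Bool) (r : Wd k) : Wd k :=
  List.casesOn r [x] fun y t => if x.1 = y.1 ∧ x.2 = !y.2 then t else x :: y :: t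

lemma reduce_eq_foldr (L : Wd k) : reduce L = L.foldr redStep [] := by
  induction L with
  | nil => rfl
  | cons x L ih => rw [reduce.cons, List.foldr_cons, ← ih]; rfl

theorem primrec_redStep : Primrec₂ (redStep (k := k)) := by
  have hcond : PrimrecPred fun p : ((Fin k × Bool) × Wd k) × (Fin k × Bool) × Wd k =>
      p.1.1.1 = p.2.1.1 ∧ p.1.1.2 = !p.2.1.2 :=
    PrimrecPred.and
      (Primrec.eq.comp (Primrec.fst.comp (Primrec.fst.comp .fst))
        (Primrec.fst.comp (Primrec.fst.comp .snd)))
      (Primrec.eq.comp (Primrec.snd.comp (Primrec.fst.comp .fst))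
        ((Primrec.dom_bool (!·)).comp (Primrec.snd.comp (Primrec.fst.comp .snd))))
  have h := Primrec.list_casesOn (f := fun p : (Fin k × Bool) × Wd k => p.2)
    (g := fun p => [p.1])
    (h := fun p q => if p.1.1 = q.1.1 ∧ p.1.2 = !q.1.2 then q.2 else p.1 :: q.1 :: q.2)
    Primrec.snd (Primrec.list_cons.comp .fst (Primrec.const []))
    (Primrec.ite hcond (Primrec.snd.comp .snd)
      (Primrec.list_cons.comp (Primrec.fst.comp .fst)
        (Primrec.list_cons.comp (Primrec.fst.comp .snd) (Primrec.snd.comp .snd)))).to₂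
  exact Primrec₂.mk <| h.of_eq fun p => by
    rcases p with ⟨x, r⟩
    cases r <;> rfl

theorem primrec_reduce : Primrec (reduce : Wd k → Wd k) := by
  have h : Primrec fun l : Wd k => l.foldr (fun b s => redStep b s) [] :=
    Primrec.list_foldr .id (Primrec.const [])
      (primrec_redStep.comp (Primrec.fst.comp .snd) (Primrec.snd.comp .snd)).to₂
  exact h.of_eq fun l => (reduce_eq_foldr l).symm

theorem primrec_conjWord : Primrec (conjWord : Wd k × Wd k × Bool → Wd k) := by
  have : Primrec fun p : Wd k × Wd k × Bool =>
      p.1 ++ (cond p.2.2 p.2.1 (invRev p.2.1)) ++ invRev p.1 :=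
    Primrec.list_append.comp
      (Primrec.list_append.comp .fst
        (Primrec.cond (Primrec.snd.comp .snd) (Primrec.fst.comp .snd)
          (primrec_invRev.comp (Primrec.fst.comp .snd))))
      (primrec_invRev.comp .fst)
  exact this.of_eq fun p => rfl

theorem primrec_wordOf : Primrec (wordOf : List (Wd k × Wd k × Bool) → Wd k) :=
  Primrec.list_flatten.comp (Primrec.list_map .id (primrec_conjWord.comp .snd).to₂)


def GoodT (M : Subgroup (FreeGroup (Fin k))) (T : List (Wd k)) : Prop :=
  (∃ t ∈ T, mk t ∈ M) ∧
    ∀ t ∈ T, ∀ x : Fin k × Bool, ∃ t' ∈ T, mk (invRev (t ++ [x]) ++ t') ∈ M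

lemma mk_invRev_append (a b : Wd k) : mk (invRev a ++ b) = (mk a)⁻¹ * mk b := by
  rw [← mul_mk, inv_mk]

theorem finite_iff_goodT (M : Subgroup (FreeGroup (Fin k))) [M.Normal] :
    Finite (FreeGroup (Fin k) ⧸ M) ↔ ∃ T : List (Wd k), GoodT M T := by
  constructor
  · intro h
    have hsurj : Function.Surjective
        (fun l : Wd k => ((mk l : FreeGroup (Fin k)) : FreeGroup (Fin k) ⧸ M)) := by
      intro c
      obtain ⟨g, rfl⟩ := QuotientGroup.mk_surjective c
      exact ⟨g.toWord, by simp [mk_toWord]⟩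
    haveI := Fintype.ofFinite (FreeGroup (Fin k) ⧸ M)
    classical
    let rep := Function.surjInv hsurj
    refine ⟨(Finset.univ : Finset (FreeGroup (Fin k) ⧸ M)).toList.map rep, ?_, ?_⟩
    · refine ⟨rep 1, List.mem_map_of_mem (by simp), ?_⟩
      have : ((mk (rep 1) : FreeGroup (Fin k)) : FreeGroup (Fin k) ⧸ M) = 1 :=
        Function.surjInv_eq hsurj 1
      exact (QuotientGroup.eq_one_iff _).1 this
    · intro t _ x
      refine ⟨rep ((mk (t ++ [x]) : FreeGroup (Fin k)) : FreeGroup (Fin k) ⧸ M),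
        List.mem_map_of_mem (by simp), ?_⟩
      have : ((mk (rep (((mk (t ++ [x]) : FreeGroup (Fin k)) : FreeGroup (Fin k) ⧸ M))) :
          FreeGroup (Fin k)) : FreeGroup (Fin k) ⧸ M) =
          ((mk (t ++ [x]) : FreeGroup (Fin k)) : FreeGroup (Fin k) ⧸ M) :=
        Function.surjInv_eq hsurj _
      rw [mk_invRev_append]
      exact QuotientGroup.eq.1 this.symm
  · rintro ⟨T, ⟨t0, ht0T, ht0⟩, hcl⟩
    have claim : ∀ l : Wd k, ∃ t ∈ T,
        ((mk l : FreeGroup (Fin k)) : FreeGroup (Fin k) ⧸ M) = ↑(mk t) := by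
      intro l
      induction l using List.reverseRecOn with
      | nil =>
        refine ⟨t0, ht0T, ?_⟩
        rw [← one_eq_mk]
        exact ((QuotientGroup.eq_one_iff _).2 ht0).symm
      | append_singleton l x ih =>
        obtain ⟨t, htT, ht⟩ := ih
        obtain ⟨t', ht'T, ht'⟩ := hcl t htT x
        refine ⟨t', ht'T, ?_⟩
        have h1 : ((mk (t ++ [x]) : FreeGroup (Fin k)) : FreeGroup (Fin k) ⧸ M) = ↑(mk t') := by
          refine QuotientGroup.eq.2 ?_
          rw [← mk_invRev_append]; exact ht'
        calc ((mk (l ++ [x]) : FreeGroup (Fin k)) : FreeGroup (Fin k) ⧸ M)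
            = ((mk l : FreeGroup (Fin k)) : FreeGroup (Fin k) ⧸ M) * ↑(mk [x]) := by
              rw [← mul_mk]; rfl
          _ = ((mk t : FreeGroup (Fin k)) : FreeGroup (Fin k) ⧸ M) * ↑(mk [x]) := by rw [ht]
          _ = ((mk (t ++ [x]) : FreeGroup (Fin k)) : FreeGroup (Fin k) ⧸ M) := by
              rw [← mul_mk]; rfl
          _ = ↑(mk t') := h1
    refine Finite.of_surjective
      (fun i : Fin T.length => ((mk T[i] : FreeGroup (Fin k)) : FreeGroup (Fin k) ⧸ M)) ?_
    intro c
    obtain ⟨g, rfl⟩ := QuotientGroup.mk_surjective c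
    obtain ⟨t, htT, ht⟩ := claim g.toWord
    obtain ⟨i, hi, hit⟩ := List.mem_iff_getElem.1 htT
    refine ⟨⟨i, hi⟩, ?_⟩
    show ((mk T[i] : FreeGroup (Fin k)) : FreeGroup (Fin k) ⧸ M) = ↑g
    rw [hit, ← ht, mk_toWord]

theorem not_mem_iff_finite {R : Set (FreeGroup (Fin k))}
    (hji : JustInfinite (FreeGroup (Fin k) ⧸ Subgroup.normalClosure R)) (w : Wd k) :
    mk w ∉ Subgroup.normalClosure R ↔
      Finite (FreeGroup (Fin k) ⧸ Subgroup.normalClosure (R ∪ {mk w})) := by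
  set N := Subgroup.normalClosure R with hN
  set M := Subgroup.normalClosure (R ∪ {mk w}) with hM
  have hNM : N ≤ M := Subgroup.normalClosure_mono Set.subset_union_left
  constructor
  · intro hw
    set K := M.map (QuotientGroup.mk' N) with hK
    have hKnormal : K.Normal := inferInstance
    have hKne : K ≠ ⊥ := by
      intro hbot
      have hmem : (QuotientGroup.mk' N) (mk w) ∈ K :=
        ⟨mk w, Subgroup.subset_normalClosure (Set.mem_union_right _ rfl), rfl⟩
      rw [hbot, Subgroup.mem_bot] at hmem
      exact hw ((QuotientGroup.eq_one_iff _).1 hmem)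
    have hfin := hji.2 K hKnormal hKne
    exact Finite.of_equiv _ (QuotientGroup.quotientQuotientEquivQuotient N M hNM).toEquiv
  · intro hfin hw
    have hMN : M = N := le_antisymm
      (Subgroup.normalClosure_le_normal
        (Set.union_subset Subgroup.subset_normalClosure (Set.singleton_subset_iff.2 hw)))
      hNM
    haveI : Infinite (FreeGroup (Fin k) ⧸ M) :=
      ((QuotientGroup.quotientMulEquivOfEq hMN).toEquiv.infinite_iff).2 hji.1
    exact not_finite (FreeGroup (Fin k) ⧸ M)


def letters (k : ℕ) : List (Fin k × Bool) :=
  (List.finRange k).flatMap fun i => [(i, true), (i, false)]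

lemma mem_letters (x : Fin k × Bool) : x ∈ letters k := by
  rcases x with ⟨i, b⟩
  cases b <;> simp [letters, List.mem_flatMap]

def ver (χ : Wd k → ℕ → Bool) (v : Wd k) (n : ℕ) : Bool :=
  Option.casesOn (Encodable.decode (α := List (Wd k × Wd k × Bool) × ℕ) n) false
    fun Lj => (Lj.1.all fun p => χ p.2.1 Lj.2) && decide (reduce (wordOf Lj.1) = reduce v)

def nu (χ : Wd k → ℕ → Bool) (v : Wd k) (m : ℕ) : Bool :=
  (List.range m).any fun n => ver χ v n

def tableChk (χ : Wd k → ℕ → Bool) (T : List (Wd k)) (m : ℕ) : Bool :=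
  (T.any fun t => nu χ t m) &&
    (T.all fun t => (letters k).all fun x => T.any fun t' =>
      nu χ (invRev (t ++ [x]) ++ t') m)

def V2 (χ : Wd k → ℕ → Bool) (n : ℕ) : Bool :=
  Option.casesOn (Encodable.decode (α := List (Wd k) × ℕ) n) false
    fun Tm => tableChk χ Tm.1 Tm.2

section PR
variable {α : Type} [Primcodable α] {ψ : α → Wd k → ℕ → Bool}

theorem primrec_ver (hψ : Primrec fun p : α × Wd k × ℕ => ψ p.1 p.2.1 p.2.2) : Primrec fun q : α × Wd k × ℕ => ver (ψ q.1) q.2.1 q.2.2 := by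
  have part1 : Primrec fun c : (α × Wd k × ℕ) × (List (Wd k × Wd k × Bool) × ℕ) =>
      c.2.1.all fun p => ψ c.1.1 p.2.1 c.2.2 :=
    primrec_all (fst.comp snd)
      ((hψ.comp ((fst.comp (fst.comp fst)).pair
        ((fst.comp (snd.comp snd)).pair (snd.comp (snd.comp fst))))).to₂)
  have part2 : Primrec fun c : (α × Wd k × ℕ) × (List (Wd k × Wd k × Bool) × ℕ) =>
      decide (reduce (wordOf c.2.1) = reduce c.1.2.1) :=
    (Primrec.eq.comp (primrec_reduce.comp (primrec_wordOf.comp (fst.comp snd)))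
      (primrec_reduce.comp ((fst.comp snd).comp fst))).decide
  have h := Primrec.option_casesOn
    (o := fun q : α × Wd k × ℕ => Encodable.decode (α := List (Wd k × Wd k × Bool) × ℕ) q.2.2)
    (Primrec.decode.comp (snd.comp snd)) (Primrec.const false)
    (((Primrec.dom_bool₂ (· && ·)).comp part1 part2).to₂)
  exact h.of_eq fun q => rfl

theorem primrec_nu (hψ : Primrec fun p : α × Wd k × ℕ => ψ p.1 p.2.1 p.2.2) : Primrec fun q : α × Wd k × ℕ => nu (ψ q.1) q.2.1 q.2.2 :=
  primrec_any (list_range.comp (snd.comp snd))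
    (((primrec_ver hψ).comp ((fst.comp fst).pair
      (((fst.comp snd).comp fst).pair snd))).to₂)

theorem primrec_tableChk (hψ : Primrec fun p : α × Wd k × ℕ => ψ p.1 p.2.1 p.2.2) :
    Primrec fun q : α × List (Wd k) × ℕ => tableChk (ψ q.1) q.2.1 q.2.2 := by
  have hnu := primrec_nu hψ
  have part1 : Primrec fun q : α × List (Wd k) × ℕ => q.2.1.any fun t => nu (ψ q.1) t q.2.2 :=
    primrec_any (fst.comp snd)
      ((hnu.comp ((fst.comp fst).pair (snd.pair (snd.comp (snd.comp fst))))).to₂)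
  have inner : Primrec fun c : ((α × List (Wd k) × ℕ) × Wd k) × (Fin k × Bool) =>
      c.1.1.2.1.any fun t' => nu (ψ c.1.1.1) (invRev (c.1.2 ++ [c.2]) ++ t') c.1.1.2.2 := by
    refine primrec_any
      (f := fun c : ((α × List (Wd k) × ℕ) × Wd k) × (Fin k × Bool) => c.1.1.2.1)
      (g := fun c t' => nu (ψ c.1.1.1) (invRev (c.1.2 ++ [c.2]) ++ t') c.1.1.2.2)
      ((fst.comp snd).comp (fst.comp fst)) ?_
    have h1 : Primrec fun d : (((α × List (Wd k) × ℕ) × Wd k) × (Fin k × Bool)) × Wd k =>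
        d.1.1.1.1 := fst.comp (fst.comp (fst.comp fst))
    have h2 : Primrec fun d : (((α × List (Wd k) × ℕ) × Wd k) × (Fin k × Bool)) × Wd k =>
        invRev (d.1.1.2 ++ [d.1.2]) ++ d.2 :=
      Primrec.list_append.comp
        (primrec_invRev.comp (Primrec.list_append.comp (snd.comp (fst.comp fst))
          (Primrec.list_cons.comp (snd.comp fst) (Primrec.const []))))
        snd
    have h3 : Primrec fun d : (((α × List (Wd k) × ℕ) × Wd k) × (Fin k × Bool)) × Wd k =>
        d.1.1.1.2.2 := snd.comp (snd.comp (fst.comp (fst.comp fst)))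
    exact (hnu.comp (h1.pair (h2.pair h3))).to₂
  have part2 : Primrec fun q : α × List (Wd k) × ℕ =>
      q.2.1.all fun t => (letters k).all fun x => q.2.1.any fun t' =>
        nu (ψ q.1) (invRev (t ++ [x]) ++ t') q.2.2 :=
    primrec_all (fst.comp snd)
      ((primrec_all (Primrec.const (letters k)) inner.to₂).to₂)
  exact ((Primrec.dom_bool₂ (· && ·)).comp part1 part2).of_eq fun q => rfl

theorem primrec_V2 (hψ : Primrec fun p : α × Wd k × ℕ => ψ p.1 p.2.1 p.2.2) : Primrec fun q : α × ℕ => V2 (ψ q.1) q.2 := by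
  have h := Primrec.option_casesOn
    (o := fun q : α × ℕ => Encodable.decode (α := List (Wd k) × ℕ) q.2)
    (Primrec.decode.comp snd) (Primrec.const false)
    (((primrec_tableChk hψ).comp ((fst.comp fst).pair snd)).to₂)
  exact h.of_eq fun q => rfl
end PR

-- Spec lemmas

lemma mk_eq_mk_iff {a b : Wd k} : mk a = mk b ↔ reduce a = reduce b := by
  rw [← toWord_inj, toWord_mk, toWord_mk]

lemma exists_uniform_bound {β : Type*} {Q : β → ℕ → Prop} (l : List β)
    (mono : ∀ b m n, m ≤ n → Q b m → Q b n) (h : ∀ b ∈ l, ∃ m, Q b m) :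
    ∃ m, ∀ b ∈ l, Q b m := by
  induction l with
  | nil => exact ⟨0, by simp⟩
  | cons b l ih =>
    obtain ⟨m1, hm1⟩ := h b (List.mem_cons_self)
    obtain ⟨m2, hm2⟩ := ih fun c hc => h c (List.mem_cons_of_mem _ hc)
    refine ⟨max m1 m2, ?_⟩
    intro c hc
    rcases List.mem_cons.1 hc with rfl | hc
    · exact mono _ _ _ (le_max_left _ _) hm1
    · exact mono _ _ _ (le_max_right _ _) (hm2 c hc)

section Spec
variable {S : Set (FreeGroup (Fin k))} {χ : Wd k → ℕ → Bool}

theorem ver_spec (hmono : ∀ r m n, m ≤ n → χ r m = true → χ r n = true)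
    (hχ : ∀ r, mk r ∈ S ↔ ∃ j, χ r j = true) (v : Wd k) :
    mk v ∈ Subgroup.normalClosure S ↔ ∃ n, ver χ v n = true := by
  rw [mem_normalClosure_iff]
  constructor
  · rintro ⟨L, h1, h2⟩
    have hb : ∀ p ∈ L, ∃ j, χ p.2.1 j = true := fun p hp => (hχ _).1 (h1 p hp)
    obtain ⟨j, hj⟩ := exists_uniform_bound L (Q := fun p m => χ p.2.1 m = true) (fun p m n hmn h => hmono p.2.1 m n hmn h) hb
    refine ⟨Encodable.encode ((L, j) : List (Wd k × Wd k × Bool) × ℕ), ?_⟩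
    simp only [ver, Encodable.encodek]
    rw [Bool.and_eq_true, List.all_eq_true, decide_eq_true_eq]
    exact ⟨fun p hp => hj p hp, mk_eq_mk_iff.1 h2⟩
  · rintro ⟨n, hn⟩
    rcases hd : (Encodable.decode (α := List (Wd k × Wd k × Bool) × ℕ) n) with - | ⟨L, j⟩ <;>
      rw [ver, hd] at hn
    · exact absurd hn (by simp)
    · rw [Bool.and_eq_true, List.all_eq_true, decide_eq_true_eq] at hn
      exact ⟨L, fun p hp => (hχ _).2 ⟨j, hn.1 p hp⟩, mk_eq_mk_iff.2 hn.2⟩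

theorem nu_mono {v : Wd k} {m m' : ℕ} (h : m ≤ m') (hm : nu χ v m = true) :
    nu χ v m' = true := by
  rw [nu, List.any_eq_true] at hm ⊢
  obtain ⟨n, hn, hvn⟩ := hm
  exact ⟨n, List.mem_range.2 (lt_of_lt_of_le (List.mem_range.1 hn) h), hvn⟩

theorem nu_iff (hmono : ∀ r m n, m ≤ n → χ r m = true → χ r n = true)
    (hχ : ∀ r, mk r ∈ S ↔ ∃ j, χ r j = true) (v : Wd k) :
    mk v ∈ Subgroup.normalClosure S ↔ ∃ m, nu χ v m = true := by
  rw [ver_spec hmono hχ]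
  constructor
  · rintro ⟨n, hn⟩
    exact ⟨n + 1, by rw [nu, List.any_eq_true]; exact ⟨n, List.mem_range.2 (Nat.lt_succ_self n), hn⟩⟩
  · rintro ⟨m, hm⟩
    rw [nu, List.any_eq_true] at hm
    obtain ⟨n, _, hn⟩ := hm
    exact ⟨n, hn⟩

theorem V2_spec (hmono : ∀ r m n, m ≤ n → χ r m = true → χ r n = true)
    (hχ : ∀ r, mk r ∈ S ↔ ∃ j, χ r j = true) :
    (∃ T : List (Wd k), GoodT (Subgroup.normalClosure S) T) ↔ ∃ n, V2 χ n = true := by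
  constructor
  · rintro ⟨T, ⟨t0, ht0T, ht0⟩, hcl⟩
    obtain ⟨m0, hm0⟩ := (nu_iff hmono hχ t0).1 ht0
    have hQ : ∀ p ∈ T ×ˢ letters k, ∃ m, ∃ t' ∈ T,
        nu χ (invRev (p.1 ++ [p.2]) ++ t') m = true := by
      rintro ⟨t, x⟩ hp
      rw [List.mem_product] at hp
      obtain ⟨t', ht'T, ht'⟩ := hcl t hp.1 x
      obtain ⟨m, hm⟩ := (nu_iff hmono hχ _).1 ht'
      exact ⟨m, t', ht'T, hm⟩
    obtain ⟨m1, hm1⟩ := exists_uniform_bound (T ×ˢ letters k)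
      (fun p m n hmn ⟨t', ht'T, h⟩ => ⟨t', ht'T, nu_mono hmn h⟩) hQ
    refine ⟨Encodable.encode ((T, max m0 m1) : List (Wd k) × ℕ), ?_⟩
    simp only [V2, Encodable.encodek]
    simp only [tableChk]
    rw [Bool.and_eq_true, List.any_eq_true, List.all_eq_true]
    constructor
    · exact ⟨t0, ht0T, nu_mono (le_max_left _ _) hm0⟩
    · intro t ht
      rw [List.all_eq_true]
      intro x _
      rw [List.any_eq_true]
      obtain ⟨t', ht'T, h⟩ := hm1 (t, x) (List.mem_product.2 ⟨ht, mem_letters x⟩)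
      exact ⟨t', ht'T, nu_mono (le_max_right _ _) h⟩
  · rintro ⟨n, hn⟩
    rcases hd : (Encodable.decode (α := List (Wd k) × ℕ) n) with - | ⟨T, m⟩ <;>
      rw [V2, hd] at hn
    · exact absurd hn (by simp)
    · simp only [tableChk] at hn
      rw [Bool.and_eq_true, List.any_eq_true, List.all_eq_true] at hn
      obtain ⟨⟨t0, ht0T, ht0⟩, hall⟩ := hn
      refine ⟨T, ⟨t0, ht0T, (nu_iff hmono hχ _).2 ⟨m, ht0⟩⟩, ?_⟩
      intro t ht x
      have := hall t ht
      rw [List.all_eq_true] at this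
      have := this x (mem_letters x)
      rw [List.any_eq_true] at this
      obtain ⟨t', ht'T, h⟩ := this
      exact ⟨t', ht'T, (nu_iff hmono hχ _).2 ⟨m, h⟩⟩

end Spec
end WP

/-- Main theorem: a finitely generated, recursively presented just infinite group
has decidable word problem. -/
theorem stmt_9 {k : ℕ} (R : Set (FreeGroup (Fin k)))
    (hR : REPred (fun w : List (Fin k × Bool) => FreeGroup.mk w ∈ R))
    (hji : JustInfinite (FreeGroup (Fin k) ⧸ Subgroup.normalClosure R)) :
    ComputablePred (fun w : List (Fin k × Bool) =>
      FreeGroup.mk w ∈ Subgroup.normalClosure R) := by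
  open WP Primrec FreeGroup in
  obtain ⟨χ, hχprim, hχmono, hχspec⟩ := exists_verifier_of_rePred hR
  rw [ComputablePred.computable_iff_re_compl_re']
  constructor
  · -- membership is r.e.
    refine rePred_of_exists (f := fun w n => ver χ w n) ?_ ?_
    · have hψ : Primrec fun p : Unit × WP.Wd k × ℕ => χ p.2.1 p.2.2 :=
        hχprim.comp (fst.comp snd) (snd.comp snd)
      have h := (primrec_ver (ψ := fun _ : Unit => χ) hψ).comp
        (Primrec.pair (Primrec.const ()) Primrec.id)
      exact h.to_comp.to₂
    · intro w
      exact ver_spec hχmono (fun r => hχspec r) w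
  · -- non-membership is r.e.
    set χw : WP.Wd k → WP.Wd k → ℕ → Bool :=
      fun w r j => χ r j || decide (reduce r = reduce w) with hχw
    have hχwmono : ∀ w r m n, m ≤ n → χw w r m = true → χw w r n = true := by
      intro w r m n hmn h
      rw [hχw, Bool.or_eq_true] at h ⊢
      rcases h with h | h
      · exact Or.inl (hχmono r m n hmn h)
      · exact Or.inr h
    have hχwspec : ∀ w r, mk r ∈ R ∪ {mk w} ↔ ∃ j, χw w r j = true := by
      intro w r
      simp only [hχw, Bool.or_eq_true, decide_eq_true_eq, Set.mem_union, Set.mem_singleton_iff]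
      rw [hχspec r]
      constructor
      · rintro (⟨j, hj⟩ | h)
        · exact ⟨j, Or.inl hj⟩
        · exact ⟨0, Or.inr (mk_eq_mk_iff.1 h)⟩
      · rintro ⟨j, hj | hj⟩
        · exact Or.inl ⟨j, hj⟩
        · exact Or.inr (mk_eq_mk_iff.2 hj)
    refine rePred_of_exists (f := fun w n => V2 (χw w) n) ?_ ?_
    · have hψ : Primrec fun p : WP.Wd k × WP.Wd k × ℕ => χw p.1 p.2.1 p.2.2 :=
        (Primrec.dom_bool₂ (· || ·)).comp
          (hχprim.comp (fst.comp snd) (snd.comp snd))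
          (Primrec.eq.comp (primrec_reduce.comp (fst.comp snd)) (primrec_reduce.comp fst)).decide
      exact (primrec_V2 (ψ := χw) hψ).to_comp.to₂
    · intro w
      rw [not_mem_iff_finite hji w, finite_iff_goodT]
      exact V2_spec (hχwmono w) (hχwspec w)
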